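/- Let n ≥ 3 be an integer and a_1, ..., a_n real numbers. Then ∑_{1 ≤ i < j ≤ n} a_i a_j − a_1 a_2 ≤ ((n−2)/(2(n−1))) (∑_{i=1}^n a_i)². -/

import Mathlib

open Finset

lemma chen_pair_sum (n : ℕ) (a : ℕ → ℝ) :
    2 * (∑ i ∈ Finset.range n, ∑ j ∈ Finset.Ico (i + 1) n, a i * a j)
      + ∑ i ∈ Finset.range n, (a i) ^ 2 = (∑ i ∈ Finset.range n, a i) ^ 2 := by
  induction n with
  | zero => simp
  | succ n ih =>
    have h1 : ∀ i ∈ Finset.range n,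
        ∑ j ∈ Finset.Ico (i + 1) (n + 1), a i * a j
          = (∑ j ∈ Finset.Ico (i + 1) n, a i * a j) + a i * a n := by
      intro i hi
      rw [Finset.sum_Ico_succ_top (by simp at hi; omega)]
    rw [Finset.sum_range_succ (fun i => ∑ j ∈ Finset.Ico (i + 1) (n + 1), a i * a j),
      Finset.sum_congr rfl h1, Finset.sum_add_distrib, ← Finset.sum_mul,
      Finset.sum_range_succ (fun i => a i ^ 2), Finset.sum_range_succ a]
    simp only [Finset.Ico_self, Finset.sum_empty, add_zero]
    ring_nf
    ring_nf at ih
    nlinarith [ih]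

theorem chen_lemma (n : ℕ) (hn : 3 ≤ n) (a : ℕ → ℝ) :
    (∑ i ∈ Finset.range n, ∑ j ∈ Finset.Ico (i + 1) n, a i * a j) - a 0 * a 1 ≤
      ((n - 2 : ℝ) / (2 * (n - 1))) * (∑ i ∈ Finset.range n, a i) ^ 2 := by
  set S := ∑ i ∈ Finset.range n, a i with hS
  set Q := ∑ i ∈ Finset.range n, (a i) ^ 2 with hQ
  set P := ∑ i ∈ Finset.range n, ∑ j ∈ Finset.Ico (i + 1) n, a i * a j with hP
  have hid : 2 * P + Q = S ^ 2 := chen_pair_sum n a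
  -- Cauchy-Schwarz step
  set b : ℕ → ℝ := fun i => if i = 0 then a 0 + a 1 else a (i + 1) with hb
  have hcard : (Finset.range (n - 1)).card = n - 1 := Finset.card_range _
  have hkey0 := sq_sum_le_card_mul_sum_sq (s := Finset.range (n - 1)) (f := b)
  have hbs : ∑ i ∈ Finset.range (n - 1), b i = S := by
    have h01 : 0 < n - 1 := by omega
    rw [Finset.range_eq_Ico, ← Finset.sum_Ico_consecutive _ (Nat.zero_le 1) (by omega)]
    have : ∑ i ∈ Finset.Ico 1 (n - 1), b i = ∑ j ∈ Finset.Ico 2 n, a j := by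
      rw [Finset.sum_Ico_eq_sum_range, Finset.sum_Ico_eq_sum_range]
      apply Finset.sum_congr (by congr 1 <;> omega)
      intro i hi
      simp only [hb]
      rw [if_neg (by omega)]
      congr 1
      omega
    rw [this, hS, Finset.range_eq_Ico, ← Finset.sum_Ico_consecutive a (Nat.zero_le 2) (by omega)]
    have h2 : ∑ j ∈ Finset.Ico 0 2, a j = a 0 + a 1 := by
      rw [show Finset.Ico 0 2 = Finset.range 2 from rfl]
      simp [Finset.sum_range_succ]
    have h3 : ∑ i ∈ Finset.Ico 0 1, b i = a 0 + a 1 := by simp [hb]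
    rw [h2, h3]
  have hbq : ∑ i ∈ Finset.range (n - 1), (b i) ^ 2 = (a 0 + a 1) ^ 2 + ∑ j ∈ Finset.Ico 2 n, (a j) ^ 2 := by
    have h01 : 0 < n - 1 := by omega
    rw [Finset.range_eq_Ico, ← Finset.sum_Ico_consecutive _ (Nat.zero_le 1) (by omega)]
    have : ∑ i ∈ Finset.Ico 1 (n - 1), (b i) ^ 2 = ∑ j ∈ Finset.Ico 2 n, (a j) ^ 2 := by
      rw [Finset.sum_Ico_eq_sum_range, Finset.sum_Ico_eq_sum_range]
      apply Finset.sum_congr (by congr 1 <;> omega)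
      intro i hi
      simp only [hb]
      rw [if_neg (by omega)]
      congr 2
      omega
    rw [this]
    simp [hb, Finset.sum_Ico_eq_sum_range]
  have hQsplit : Q = a 0 ^ 2 + a 1 ^ 2 + ∑ j ∈ Finset.Ico 2 n, (a j) ^ 2 := by
    rw [hQ, Finset.range_eq_Ico,
      ← Finset.sum_Ico_consecutive (fun i => a i ^ 2) (Nat.zero_le 2) (by omega : 2 ≤ n)]
    congr 1
    rw [show Finset.Ico 0 2 = Finset.range 2 from rfl]
    simp [Finset.sum_range_succ]
  have hn1 : ((n - 1 : ℕ) : ℝ) = (n : ℝ) - 1 := by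
    rw [Nat.cast_sub (by omega)]; simp
  have hkey : S ^ 2 ≤ ((n : ℝ) - 1) * (Q + 2 * (a 0 * a 1)) := by
    have := hkey0
    rw [hbs, hbq, hcard, hn1] at this
    nlinarith [this]
  have hd : (0 : ℝ) < (n : ℝ) - 1 := by
    have : (3 : ℝ) ≤ (n : ℝ) := by exact_mod_cast hn
    linarith
  rw [div_mul_eq_mul_div, le_div_iff₀ (by positivity)]
  nlinarith [hkey, hid]
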